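/- Let (M, Φ) be a difference module over a difference field (K, σ): M a finite-dimensional K-vector space, Φ a σ-semilinear automorphism. Let (e_0, …, e_{n-1}) be a cyclic basis with Φ(e_i) = e_{i+1} for i ≤ n−2 and Φ(e_{n-1}) = −a_n e_0 − ⋯ − a_1 e_{n-1}, a_n ≠ 0. Let Φ^∨ be the dual (contragredient) semilinear automorphism on M^∨, characterized by ⟨Φ^∨(u), Φ(v)⟩ = σ(⟨u, v⟩). Then e_{n-1}^∨ is a cyclic vector of (M^∨, Φ^∨), and its minimal polynomial is P^∨ = σ^n + b_1 σ^{n-1} + ⋯ + b_n with b_i = σ^{n-i-1}(a_{n-i})/σ^{n-1}(a_n) for 1 ≤ i ≤ n (convention a_0 = 1). -/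

import Mathlib

/-- Dual of a cyclic difference module (Proposition 2.1.10): let `(M, Φ)` be a difference
module over `(K, σ)` with cyclic basis `(e_0, …, e_{n-1})`, `Φ(e_i) = e_{i+1}` for
`i ≤ n−2` and `Φ(e_{n-1}) = −a_n e_0 − ⋯ − a_1 e_{n-1}` (`a_n ≠ 0`, convention
`a_0 = 1`).  Let `Φ^∨` be the contragredient semilinear automorphism of `M^∨`,
characterized by `⟨Φ^∨(u), Φ(v)⟩ = σ(⟨u, v⟩)`.  Then `e_{n-1}^∨` is a cyclic vector of
`(M^∨, Φ^∨)` (the iterates `(Φ^∨)^i e_{n-1}^∨`, `i < n`, are independent) and its minimal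
polynomial is `P^∨ = σ^n + b_1 σ^{n-1} + ⋯ + b_n` with
`b_i = σ^{n-i-1}(a_{n-i})/σ^{n-1}(a_n)`. -/
theorem stmt_15 {K : Type*} [Field K] (σ : RingAut K) (n : ℕ) (hn : 1 ≤ n)
    (a : ℕ → K) (ha0 : a 0 = 1) (han : a n ≠ 0)
    (Φ : (Fin n → K) → Fin n → K) (hbij : Function.Bijective Φ)
    (hadd : ∀ x y, Φ (x + y) = Φ x + Φ y)
    (hsmul : ∀ (c : K) (x : Fin n → K), Φ (c • x) = σ c • Φ x)
    (hcyc : ∀ (i : Fin n) (hi : (i : ℕ) + 1 < n),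
      Φ (Pi.single i (1 : K)) = Pi.single (⟨(i : ℕ) + 1, hi⟩ : Fin n) 1)
    (hlast : Φ (Pi.single (⟨n - 1, by omega⟩ : Fin n) (1 : K)) =
      - ∑ j : Fin n, a (n - (j : ℕ)) • (Pi.single j (1 : K) : Fin n → K))
    (Φd : Module.Dual K (Fin n → K) → Module.Dual K (Fin n → K))
    (hdbij : Function.Bijective Φd)
    (hdual : ∀ (u : Module.Dual K (Fin n → K)) (v : Fin n → K), Φd u (Φ v) = σ (u v)) :
    LinearIndependent K (fun i : Fin n =>
      Φd^[(i : ℕ)] (LinearMap.proj (⟨n - 1, by omega⟩ : Fin n))) ∧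
    Φd^[n] (LinearMap.proj (⟨n - 1, by omega⟩ : Fin n)) +
      ∑ i ∈ Finset.Icc 1 n,
        ((σ ^ (n - i - 1)) (a (n - i)) / (σ ^ (n - 1)) (a n)) •
          Φd^[n - i] (LinearMap.proj (⟨n - 1, by omega⟩ : Fin n)) = 0 := by
  classical
  rcases eq_or_lt_of_le hn with h1 | h2
  · -- n = 1
    subst h1
    set F : Module.Dual K (Fin 1 → K) := LinearMap.proj (⟨1 - 1, by omega⟩ : Fin 1) with hFdef
    have hF1 : F (Pi.single (0 : Fin 1) 1) = 1 := by
      simp [hFdef]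
    have hΦ : Φ (Pi.single (0 : Fin 1) (1 : K)) =
        -(a 1 • (Pi.single (0 : Fin 1) (1 : K) : Fin 1 → K)) := by
      have := hlast
      simpa [Fin.sum_univ_one] using this
    have hΦdF : a 1 * Φd F (Pi.single (0 : Fin 1) 1) = -1 := by
      have h2 : Φd F (Φ (Pi.single (0 : Fin 1) 1)) = 1 := by
        rw [hdual]; rw [hF1]; simp
      rw [hΦ, map_neg, map_smul, smul_eq_mul] at h2
      linear_combination -h2
    constructor
    · refine linearIndependent_unique_iff.mpr ?_
      intro h
      have := congrArg (fun (L : Module.Dual K (Fin 1 → K)) => L (Pi.single 0 1)) h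
      rw [show ((default : Fin 1) : ℕ) = 0 from rfl] at this
      simp only [Function.iterate_zero, id_eq, LinearMap.zero_apply] at this
      rw [hF1] at this
      exact one_ne_zero this
    · have key : Φd^[1] F + ∑ i ∈ Finset.Icc 1 1,
          ((σ ^ (1 - i - 1)) (a (1 - i)) / (σ ^ (1 - 1)) (a 1)) • Φd^[1 - i] F = 0 := by
        rw [Finset.Icc_self, Finset.sum_singleton]
        refine Module.Basis.ext (Pi.basisFun K (Fin 1)) ?_
        intro t
        have ht : t = 0 := Subsingleton.elim _ _
        subst ht
        simp only [Pi.basisFun_apply, LinearMap.add_apply, LinearMap.smul_apply, smul_eq_mul,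
          LinearMap.zero_apply, Function.iterate_one, Function.iterate_zero, id_eq]
        rw [pow_zero]
        rw [show ((1 : RingAut K) (a 0)) = a 0 from rfl, show ((1 : RingAut K) (a 1)) = a 1 from rfl]
        rw [ha0, show (1:ℕ) - 1 = 0 from rfl]
        simp only [Function.iterate_zero, id_eq]
        rw [hF1]
        have hne : a 1 ≠ 0 := han
        have hX : (Φd F) (Pi.single (0 : Fin 1) 1) = -1 / a 1 := by
          rw [eq_div_iff hne]; linear_combination hΦdF
        rw [hX, mul_one]
        ring
      exact key
  · -- 2 ≤ n
    set F : Module.Dual K (Fin n → K) := LinearMap.proj (⟨n - 1, by omega⟩ : Fin n) with hFdef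
    have hσ0 : ∀ x : K, (σ^0) x = x := fun x => by rw [pow_zero]; rfl
    have hσS : ∀ (k : ℕ) (x : K), (σ^(k+1)) x = σ ((σ^k) x) := fun k x => by
      rw [pow_succ']; rfl
    have hσadd : ∀ (p q : ℕ) (x : K), (σ^(p+q)) x = (σ^p) ((σ^q) x) := fun p q x => by
      rw [pow_add]; rfl
    have hσne : ∀ (k : ℕ) (x : K), x ≠ 0 → (σ^k) x ≠ 0 := fun k x h => (map_ne_zero (σ^k)).mpr h
    have hf0 : ∀ t : Fin n, F (Pi.single t 1) = if (t : ℕ) = n - 1 then 1 else 0 := by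
      intro t
      simp [hFdef, Pi.single_apply, Fin.ext_iff, eq_comm]
    have happ : ∀ (m : ℕ) (v : Fin n → K), Φd^[m+1] F (Φ v) = σ (Φd^[m] F v) := by
      intro m v; rw [Function.iterate_succ_apply']; exact hdual _ v
    -- the sequence δ
    set δ : ℕ → K := fun m => Φd^[m] F (Pi.single (⟨0, by omega⟩ : Fin n) 1) with hδdef
    have hδ0 : δ 0 = 0 := by
      simp only [hδdef, Function.iterate_zero, id_eq]
      rw [hf0]
      simp only [ite_eq_right_iff]
      intro h; omega
    -- lower-triangular values
    have hLa : ∀ (t m : ℕ) (htn : t < n), t ≤ m →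
        Φd^[m] F (Pi.single (⟨t, htn⟩ : Fin n) 1) = (σ^t) (δ (m - t)) := by
      intro t
      induction t with
      | zero =>
        intro m htn _
        rw [Nat.sub_zero, hσ0]
      | succ t ih =>
        intro m htn hle
        obtain ⟨m', rfl⟩ : ∃ m', m = m' + 1 := ⟨m - 1, by omega⟩
        have hstep : Pi.single (⟨t+1, htn⟩ : Fin n) (1:K) =
            Φ (Pi.single (⟨t, by omega⟩ : Fin n) 1) := (hcyc ⟨t, by omega⟩ htn).symm
        rw [hstep, happ, ih m' (by omega) (by omega), ← hσS, Nat.succ_sub_succ]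
    -- strictly-upper values vanish
    have hLb : ∀ (m t : ℕ) (htn : t < n), m + 1 < t →
        Φd^[m+1] F (Pi.single (⟨t, htn⟩ : Fin n) 1) = 0 := by
      intro m
      induction m with
      | zero =>
        intro t htn h
        obtain ⟨t', rfl⟩ : ∃ t', t = t' + 1 := ⟨t - 1, by omega⟩
        have hstep : Pi.single (⟨t'+1, htn⟩ : Fin n) (1:K) =
            Φ (Pi.single (⟨t', by omega⟩ : Fin n) 1) := (hcyc ⟨t', by omega⟩ htn).symm
        rw [hstep, happ]
        simp only [Function.iterate_zero, id_eq]
        rw [hf0]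
        rw [if_neg (by simp only []; omega)]
        exact map_zero σ
      | succ m ih =>
        intro t htn h
        obtain ⟨t', rfl⟩ : ∃ t', t = t' + 1 := ⟨t - 1, by omega⟩
        have hstep : Pi.single (⟨t'+1, htn⟩ : Fin n) (1:K) =
            Φ (Pi.single (⟨t', by omega⟩ : Fin n) 1) := (hcyc ⟨t', by omega⟩ htn).symm
        rw [hstep, happ, ih t' (by omega) (by omega)]
        exact map_zero σ
    -- uniform value
    have hval : ∀ (r : ℕ), 1 ≤ r → ∀ (j : Fin n),
        Φd^[r] F (Pi.single j 1) = (σ^(j:ℕ)) (δ (r - (j:ℕ))) := by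
      intro r hr j
      rcases le_or_gt (j:ℕ) r with h | h
      · exact hLa (j:ℕ) r j.isLt h
      · obtain ⟨m, rfl⟩ : ∃ m, r = m + 1 := ⟨r - 1, by omega⟩
        rw [Nat.sub_eq_zero_of_le (le_of_lt h), hδ0, map_zero]
        exact hLb m (j:ℕ) j.isLt h
    -- value at the last basis vector
    have hGLast : ∀ (m : ℕ), m ≤ n - 1 →
        Φd^[m] F (Pi.single (⟨n - 1, by omega⟩ : Fin n) 1) = if m = 0 then 1 else 0 := by
      intro m hm
      rcases Nat.eq_zero_or_pos m with h0 | h0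
      · subst h0
        simp only [Function.iterate_zero, id_eq, if_pos rfl]
        rw [hf0]
        simp
      · rw [if_neg (by omega)]
        rcases eq_or_lt_of_le hm with he | hlt
        · rw [hLa (n-1) m (by omega) (by omega)]
          rw [show m - (n - 1) = 0 by omega, hδ0, map_zero]
        · obtain ⟨m', rfl⟩ : ∃ m', m = m' + 1 := ⟨m - 1, by omega⟩
          exact hLb m' (n-1) (by omega) (by omega)
    -- the fundamental recurrence for δ
    have hRec : ∀ r : ℕ, 1 ≤ r → r ≤ n →
        ∑ k ∈ Finset.range n, a (n - k) * (σ^k) (δ (r - k)) = if r = 1 then -1 else 0 := by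
      intro r hr hrn
      obtain ⟨m, rfl⟩ : ∃ m, r = m + 1 := ⟨r - 1, by omega⟩
      have h1 : Φd^[m+1] F (Φ (Pi.single (⟨n - 1, by omega⟩ : Fin n) 1)) =
          σ (Φd^[m] F (Pi.single (⟨n - 1, by omega⟩ : Fin n) 1)) := happ _ _
      rw [hlast, map_neg, map_sum] at h1
      simp only [map_smul, smul_eq_mul] at h1
      rw [hGLast m (by omega)] at h1
      have h3 : ∀ j : Fin n, a (n - (j:ℕ)) * Φd^[m+1] F (Pi.single j 1)
          = a (n - (j:ℕ)) * (σ^(j:ℕ)) (δ (m + 1 - (j:ℕ))) := fun j => by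
        rw [hval (m+1) (by omega) j]
      rw [Finset.sum_congr rfl (fun j _ => h3 j)] at h1
      rw [← Fin.sum_univ_eq_sum_range (fun k => a (n - k) * (σ^k) (δ (m + 1 - k))) n]
      have h4 : -(∑ j : Fin n, a (n - (j:ℕ)) * (σ^(j:ℕ)) (δ (m + 1 - (j:ℕ))))
          = σ (if m = 0 then 1 else 0) := h1
      have h5 : σ (if m = 0 then 1 else 0) = if m + 1 = 1 then (1:K) else 0 := by
        rcases Nat.eq_zero_or_pos m with h0 | h0
        · subst h0; simp
        · rw [if_neg (by omega), if_neg (by omega), map_zero]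
      rw [h5] at h4
      have := neg_eq_iff_eq_neg.mp h4
      rw [this]
      rcases Nat.eq_zero_or_pos m with h0 | h0
      · subst h0; simp
      · rw [if_neg (by omega), if_neg (by omega), neg_zero]
    -- the auxiliary quantity E
    set E : ℕ → K := fun r =>
      (∑ s ∈ Finset.Icc 1 r, δ s * (σ^(s-1)) (a (n - r + s))) + (if r = 1 then 1 else 0)
      with hEdef
    -- double sum swap
    have hswap : ∀ r : ℕ, 1 ≤ r → r ≤ n →
        (∑ m ∈ Finset.range r, ∑ s ∈ Finset.Icc 1 (r - m),
          (a (n - m) * (σ^m) (δ s)) * (σ^(m + s - 1)) (a (n - r + (m + s))))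
        = ∑ j ∈ Finset.Icc 1 r,
            (∑ m ∈ Finset.range j, a (n - m) * (σ^m) (δ (j - m))) * (σ^(j-1)) (a (n - r + j)) := by
      intro r hr hrn
      have hrhs : ∑ j ∈ Finset.Icc 1 r,
          (∑ m ∈ Finset.range j, a (n - m) * (σ^m) (δ (j - m))) * (σ^(j-1)) (a (n - r + j))
          = ∑ j ∈ Finset.Icc 1 r, ∑ m ∈ Finset.range j,
              (a (n - m) * (σ^m) (δ (j - m))) * (σ^(j-1)) (a (n - r + j)) :=
        Finset.sum_congr rfl fun j _ => Finset.sum_mul _ _ _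
      rw [hrhs, Finset.sum_sigma', Finset.sum_sigma']
      refine Finset.sum_nbij' (fun p => ⟨p.1 + p.2, p.1⟩) (fun q => ⟨q.2, q.1 - q.2⟩)
        ?_ ?_ ?_ ?_ ?_
      · rintro ⟨m, s⟩ hp
        simp only [Finset.mem_sigma, Finset.mem_range, Finset.mem_Icc] at hp ⊢
        omega
      · rintro ⟨j, m⟩ hq
        simp only [Finset.mem_sigma, Finset.mem_range, Finset.mem_Icc] at hq ⊢
        omega
      · rintro ⟨m, s⟩ hp
        simp only [Finset.mem_sigma, Finset.mem_range, Finset.mem_Icc] at hp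
        simp only [Sigma.mk.inj_iff, heq_eq_eq]
        exact ⟨trivial, by omega⟩
      · rintro ⟨j, m⟩ hq
        simp only [Finset.mem_sigma, Finset.mem_range, Finset.mem_Icc] at hq
        simp only [Sigma.mk.inj_iff, heq_eq_eq]
        exact ⟨by omega, trivial⟩
      · rintro ⟨m, s⟩ hp
        simp only [Finset.mem_sigma, Finset.mem_range, Finset.mem_Icc] at hp
        rw [Nat.add_sub_cancel_left]
    -- key convolution identity
    have hFsum : ∀ r : ℕ, 1 ≤ r → r ≤ n →
        ∑ m ∈ Finset.range r, a (n - m) * (σ^m) (E (r - m)) = 0 := by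
      intro r hr hrn
      have expand : ∀ m ∈ Finset.range r, a (n - m) * (σ^m) (E (r - m)) =
          (∑ s ∈ Finset.Icc 1 (r - m),
            (a (n - m) * (σ^m) (δ s)) * (σ^(m + s - 1)) (a (n - r + (m + s))))
          + (if m = r - 1 then a (n - m) else 0) := by
        intro m hm
        rw [Finset.mem_range] at hm
        simp only [hEdef]
        rw [map_add, map_sum, mul_add]
        congr 1
        · rw [Finset.mul_sum]
          refine Finset.sum_congr rfl ?_
          intro s hs
          rw [Finset.mem_Icc] at hs
          rw [map_mul]
          rw [show n - (r - m) + s = n - r + (m + s) by omega]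
          rw [show m + s - 1 = m + (s - 1) by omega, hσadd]
          ring
        · rcases eq_or_ne m (r-1) with he | hne
          · rw [if_pos (by omega), if_pos he, map_one, mul_one]
          · rw [if_neg (by omega), if_neg hne, map_zero, mul_zero]
      rw [Finset.sum_congr rfl expand, Finset.sum_add_distrib, hswap r hr hrn]
      have hinner : ∀ j ∈ Finset.Icc 1 r,
          (∑ m ∈ Finset.range j, a (n - m) * (σ^m) (δ (j - m))) * (σ^(j-1)) (a (n - r + j))
          = (if j = 1 then -1 else 0) * (σ^(j-1)) (a (n - r + j)) := by
        intro j hj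
        rw [Finset.mem_Icc] at hj
        congr 1
        rw [Finset.sum_subset (Finset.range_subset_range.mpr (show j ≤ n by omega))
          (fun x _ hx => by
            rw [Finset.mem_range, not_lt] at hx
            rw [Nat.sub_eq_zero_of_le hx, hδ0, map_zero, mul_zero])]
        exact hRec j hj.1 (le_trans hj.2 hrn)
      rw [Finset.sum_congr rfl hinner]
      have e1 : ∑ j ∈ Finset.Icc 1 r, (if j = 1 then (-1:K) else 0) * (σ^(j-1)) (a (n - r + j))
          = -(a (n - r + 1)) := by
        rw [Finset.sum_congr rfl (fun j _ => by rw [ite_mul, neg_one_mul, zero_mul])]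
        rw [Finset.sum_ite_eq' (Finset.Icc 1 r) 1 (fun j => -((σ^(j-1)) (a (n - r + j))))]
        rw [if_pos (by rw [Finset.mem_Icc]; omega)]
        rw [show (1:ℕ) - 1 = 0 from rfl, hσ0]
      have e2 : ∑ m ∈ Finset.range r, (if m = r - 1 then a (n - m) else 0) = a (n - r + 1) := by
        rw [Finset.sum_ite_eq' (Finset.range r) (r-1) (fun m => a (n - m))]
        rw [if_pos (by rw [Finset.mem_range]; omega)]
        congr 1
        omega
      rw [e1, e2]
      ring
    -- E vanishes
    have hE0 : ∀ r : ℕ, 1 ≤ r → r ≤ n → E r = 0 := by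
      intro r
      induction r using Nat.strong_induction_on with
      | _ r ih =>
        intro hr hrn
        have h := hFsum r hr hrn
        obtain ⟨m, rfl⟩ : ∃ m, r = m + 1 := ⟨r - 1, by omega⟩
        rw [Finset.sum_range_succ'] at h
        have hz : ∀ i ∈ Finset.range m,
            a (n - (i+1)) * (σ^(i+1)) (E (m + 1 - (i+1))) = 0 := by
          intro i hi
          rw [Finset.mem_range] at hi
          rw [show m + 1 - (i + 1) = m - i by omega,
            ih (m - i) (by omega) (by omega) (by omega), map_zero, mul_zero]
        rw [Finset.sum_congr rfl hz, Finset.sum_const_zero, zero_add,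
          Nat.sub_zero, Nat.sub_zero, hσ0] at h
        exact (mul_eq_zero.mp h).resolve_left han
    -- δ 1
    have hδ1 : δ 1 * a n = -1 := by
      have h := hE0 1 le_rfl (by omega)
      simp only [hEdef] at h
      rw [Finset.Icc_self, Finset.sum_singleton] at h
      rw [show (1:ℕ) - 1 = 0 from rfl, hσ0, show n - 1 + 1 = n by omega] at h
      norm_num at h
      linear_combination h
    have hδ1ne : δ 1 ≠ 0 := by
      intro h
      rw [h, zero_mul] at hδ1
      exact zero_ne_one (neg_eq_zero.mp hδ1.symm).symm
    -- Part A: linear independence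
    have partA : LinearIndependent K (fun i : Fin n => Φd^[(i : ℕ)] F) := by
      rw [Fintype.linearIndependent_iff]
      intro c hc
      have heval : ∀ t : Fin n, ∑ i : Fin n, c i * (Φd^[(i:ℕ)] F (Pi.single t 1)) = 0 := by
        intro t
        have h := congrArg (fun (L : Module.Dual K (Fin n → K)) => L (Pi.single t 1)) hc
        simpa [LinearMap.sum_apply] using h
      have hc0 : c ⟨0, by omega⟩ = 0 := by
        have h := heval ⟨n - 1, by omega⟩
        have hterm : ∀ i : Fin n,
            c i * (Φd^[(i:ℕ)] F (Pi.single (⟨n - 1, by omega⟩ : Fin n) 1))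
            = if i = ⟨0, by omega⟩ then c i else 0 := by
          intro i
          rw [hGLast (i:ℕ) (by omega)]
          rcases Nat.eq_zero_or_pos (i:ℕ) with h0 | h0
          · rw [if_pos h0, if_pos (Fin.ext h0), mul_one]
          · rw [if_neg (by omega), if_neg (fun hh => by
              rw [hh] at h0; simp at h0), mul_zero]
        rw [Finset.sum_congr rfl (fun i _ => hterm i), Finset.sum_ite_eq'] at h
        simpa using h
      have hdown : ∀ k : ℕ, ∀ i : Fin n, 1 ≤ (i:ℕ) → n - k ≤ (i:ℕ) → c i = 0 := by
        intro k
        induction k with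
        | zero => intro i h1 hk; exact absurd i.isLt (by omega)
        | succ k ih =>
          intro i h1 hk
          rcases le_or_gt (n - k) (i:ℕ) with hge | hlt
          · exact ih i h1 hge
          · have h := heval ⟨(i:ℕ) - 1, by omega⟩
            have hterm : ∀ i' : Fin n,
                c i' * (Φd^[(i':ℕ)] F (Pi.single (⟨(i:ℕ) - 1, by omega⟩ : Fin n) 1))
                = if i' = i then c i' * (σ^((i:ℕ)-1)) (δ 1) else 0 := by
              intro i'
              rcases lt_trichotomy ((i':ℕ)) ((i:ℕ)) with hlt' | heq | hgt
              · rw [if_neg (fun hh => by rw [hh] at hlt'; omega)]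
                rcases Nat.eq_zero_or_pos (i':ℕ) with h0 | h0
                · rw [show (i':ℕ) = 0 from h0]
                  simp only [Function.iterate_zero, id_eq]
                  rw [hf0, if_neg (by simp only []; omega), mul_zero]
                · have := hval (i':ℕ) h0 ⟨(i:ℕ) - 1, by omega⟩
                  rw [this]
                  rw [show (i':ℕ) - ((i:ℕ) - 1) = 0 by omega, hδ0, map_zero, mul_zero]
              · have hii : i' = i := Fin.ext heq
                rw [if_pos hii, hii]
                have := hval (i:ℕ) (by omega) ⟨(i:ℕ) - 1, by omega⟩
                rw [this, show (i:ℕ) - ((i:ℕ) - 1) = 1 by omega]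
              · rw [if_neg (fun hh => by rw [hh] at hgt; omega)]
                rw [ih i' (by omega) (by omega), zero_mul]
            rw [Finset.sum_congr rfl (fun i' _ => hterm i'), Finset.sum_ite_eq'] at h
            simp only [Finset.mem_univ, if_pos] at h
            rcases mul_eq_zero.mp h with h' | h'
            · exact h'
            · exact absurd h' (hσne _ _ hδ1ne)
      intro i
      rcases Nat.eq_zero_or_pos (i:ℕ) with h0 | h0
      · have : i = ⟨0, by omega⟩ := Fin.ext h0
        rw [this]; exact hc0
      · exact hdown n i h0 (by omega)
    -- Part B
    have hDne : (σ^(n-1)) (a n) ≠ 0 := hσne _ _ han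
    have partB : Φd^[n] F + ∑ i ∈ Finset.Icc 1 n,
        ((σ ^ (n - i - 1)) (a (n - i)) / (σ ^ (n - 1)) (a n)) • Φd^[n - i] F = 0 := by
      refine Module.Basis.ext (Pi.basisFun K (Fin n)) ?_
      intro t
      have hb : (Pi.basisFun K (Fin n)) t = Pi.single t (1:K) := by
        simp [Pi.basisFun_apply]
      rw [hb]
      simp only [LinearMap.add_apply, LinearMap.sum_apply, LinearMap.smul_apply, smul_eq_mul,
        LinearMap.zero_apply]
      rw [hval n hn t]
      rcases eq_or_lt_of_le (show (t:ℕ) ≤ n - 1 by omega) with hteq | htlt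
      · -- t = n - 1, r = 1
        have hterm : ∀ i ∈ Finset.Icc 1 n,
            (σ ^ (n - i - 1)) (a (n - i)) / (σ ^ (n - 1)) (a n) * (Φd^[n - i] F (Pi.single t 1))
            = if i = n then (σ ^ (n - i - 1)) (a (n - i)) / (σ ^ (n - 1)) (a n) else 0 := by
          intro i hi
          rw [Finset.mem_Icc] at hi
          rcases eq_or_ne i n with he | hne
          · rw [if_pos he, he]
            rw [show n - n = 0 by omega]
            simp only [Function.iterate_zero, id_eq]
            rw [hf0, if_pos hteq, mul_one]
          · rw [if_neg hne]
            rw [hval (n - i) (by omega) t]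
            rw [show n - i - (t:ℕ) = 0 by omega, hδ0, map_zero, mul_zero]
        rw [Finset.sum_congr rfl hterm, Finset.sum_ite_eq' (Finset.Icc 1 n) n]
        rw [if_pos (by rw [Finset.mem_Icc]; omega)]
        rw [hteq, show n - (n-1) = 1 by omega]
        rw [show n - n - 1 = 0 by omega, show n - n = 0 by omega, hσ0, ha0]
        have hδ1' : δ 1 = -1 / a n := by
          rw [eq_div_iff han]; linear_combination hδ1
        rw [hδ1']
        rw [show ((-1 : K) / a n) = -(a n)⁻¹ by ring, map_neg, map_inv₀]
        field_simp
        ring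
      · -- t < n - 1, r = n - t ≥ 2
        set r : ℕ := n - (t:ℕ) with hrdef
        clear_value r
        have hr2 : 2 ≤ r := by omega
        have hrn : r ≤ n := by omega
        have hterm : ∀ i ∈ Finset.Icc 1 n,
            (σ ^ (n - i - 1)) (a (n - i)) / (σ ^ (n - 1)) (a n) * (Φd^[n - i] F (Pi.single t 1))
            = (σ ^ (n - i - 1)) (a (n - i)) * (σ^((t:ℕ))) (δ (r - i)) / (σ ^ (n - 1)) (a n) := by
          intro i hi
          rw [Finset.mem_Icc] at hi
          rcases eq_or_ne i n with he | hne
          · rw [he]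
            rw [show n - n = 0 by omega]
            simp only [Function.iterate_zero, id_eq]
            rw [hf0, if_neg (by omega), mul_zero]
            rw [show r - n = 0 by omega, hδ0, map_zero, mul_zero, zero_div]
          · rw [hval (n - i) (by omega) t]
            rw [show n - i - (t:ℕ) = r - i by omega]
            ring
        rw [Finset.sum_congr rfl hterm, ← Finset.sum_div]
        have hnum : ∑ i ∈ Finset.Icc 1 n, (σ ^ (n - i - 1)) (a (n - i)) * (σ^((t:ℕ))) (δ (r - i))
            = -((σ^(n-1)) (a n) * (σ^((t:ℕ))) (δ r)) := by
          have hshrink : ∑ i ∈ Finset.Icc 1 (r-1),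
              (σ ^ (n - i - 1)) (a (n - i)) * (σ^((t:ℕ))) (δ (r - i))
              = ∑ i ∈ Finset.Icc 1 n, (σ ^ (n - i - 1)) (a (n - i)) * (σ^((t:ℕ))) (δ (r - i)) := by
            refine Finset.sum_subset (by
              intro x hx; rw [Finset.mem_Icc] at hx ⊢; omega) ?_
            intro x hx hxn
            rw [Finset.mem_Icc] at hx hxn
            rw [show r - x = 0 by omega, hδ0, map_zero, mul_zero]
          rw [← hshrink]
          have hre : ∀ i ∈ Finset.Icc 1 (r-1),
              (σ ^ (n - i - 1)) (a (n - i)) * (σ^((t:ℕ))) (δ (r - i))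
              = (σ^((t:ℕ))) (δ (r - i) * (σ^((r-i)-1)) (a (n - r + (r - i)))) := by
            intro i hi
            rw [Finset.mem_Icc] at hi
            rw [map_mul]
            rw [show n - r + (r - i) = n - i by omega]
            rw [show n - i - 1 = (t:ℕ) + ((r - i) - 1) by omega, hσadd]
            ring
          rw [Finset.sum_congr rfl hre, ← map_sum]
          have hEr := hE0 r (by omega) hrn
          simp only [hEdef] at hEr
          rw [if_neg (by omega), add_zero] at hEr
          have hsplit : ∑ s ∈ Finset.Icc 1 r, δ s * (σ^(s-1)) (a (n - r + s))
              = (∑ s ∈ Finset.Icc 1 (r-1), δ s * (σ^(s-1)) (a (n - r + s)))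
                + δ r * (σ^(r-1)) (a (n - r + r)) := by
            rw [show r = (r-1) + 1 by omega]
            rw [Finset.sum_Icc_succ_top (by omega)]
            congr 2
          rw [hsplit] at hEr
          have hsumv : ∑ s ∈ Finset.Icc 1 (r-1), δ s * (σ^(s-1)) (a (n - r + s))
              = -(δ r * (σ^(r-1)) (a (n - r + r))) := by linear_combination hEr
          have hreidx : ∑ i ∈ Finset.Icc 1 (r-1), δ (r - i) * (σ^((r-i)-1)) (a (n - r + (r - i)))
              = ∑ s ∈ Finset.Icc 1 (r-1), δ s * (σ^(s-1)) (a (n - r + s)) := by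
            refine Finset.sum_nbij' (fun i => r - i) (fun s => r - s) ?_ ?_ ?_ ?_ ?_
            · intro i hi; rw [Finset.mem_Icc] at hi
              show r - i ∈ Finset.Icc 1 (r-1); rw [Finset.mem_Icc]; omega
            · intro s hs; rw [Finset.mem_Icc] at hs
              show r - s ∈ Finset.Icc 1 (r-1); rw [Finset.mem_Icc]; omega
            · intro i hi; rw [Finset.mem_Icc] at hi; show r - (r - i) = i; omega
            · intro s hs; rw [Finset.mem_Icc] at hs; show r - (r - s) = s; omega
            · intro i hi; rfl
          rw [hreidx, hsumv]
          rw [map_neg, map_mul]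
          rw [show n - r + r = n by omega]
          rw [show n - 1 = (t:ℕ) + (r - 1) by omega, hσadd]
          ring
        rw [hnum]
        field_simp
        ring
    exact ⟨partA, partB⟩
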